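/- arXiv:2210.16132 — 2 statements merged into one kernel-verified Lean document; each statement's English description precedes it below -/
import Mathlib

section
/- Let γ > 1, R⁻ > 0, C₀ > 0 and s ∈ (0, 2c_s(R⁻)). Then there exists η > 0 such that: there exist ε₀ > 0 and constants C₁, C₂ > 0 (independent of ε) such that for every ε ∈ (0, ε₀) and every function R satisfying the profile hypotheses (H_ε), the functions a(x) = (1/2)(f₂/f₁)'(x) + R'(x)f₂(x)/(R(x)f₁(x)) and b(x) = R'(x)/R(x) − f₂(x)g(x)/f₁(x) satisfy, for all x ∈ ℝ: −g(x) − |b(x)|/(2η) ≥ C₁|R'(x)| and a(x) − (η/2)|b(x)| ≥ C₂|R'(x)|. -/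
open Real Filter Topology

/-- The enthalpy for `γ > 1`: `h(ρ) = γ/(γ-1)·ρ^(γ-1)`. -/
noncomputable def enth (γ ρ : ℝ) : ℝ := γ / (γ - 1) * ρ ^ (γ - 1)

/-- The sound speed `c_s(ρ) = √(γ ρ^(γ-1))`. -/
noncomputable def soundSpeed (γ ρ : ℝ) : ℝ := Real.sqrt (γ * ρ ^ (γ - 1))

/-- The mass flux `A(ε)` of a shock of amplitude `ε` with left state `Rm`. -/
noncomputable def Aflux (γ Rm ε : ℝ) : ℝ :=
  ((Rm - ε) * Rm / Real.sqrt (2 * Rm - ε)) *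
    Real.sqrt (2 * (enth γ Rm - enth γ (Rm - ε)) / ε)

/-- The profile hypotheses (H_ε): `R` is `C²`, takes values in `[R⁻ - ε, R⁻]`, is strictly
decreasing with `R' < 0`, and satisfies `|R'| ≤ C₀ε²`, `|R''| ≤ C₀ε|R'|`. -/
def Hprof (C₀ ε Rm : ℝ) (R : ℝ → ℝ) : Prop :=
  ContDiff ℝ 2 R ∧
  (∀ x : ℝ, Rm - ε ≤ R x ∧ R x ≤ Rm ∧ deriv R x < 0) ∧
  (∀ x : ℝ, |deriv R x| ≤ C₀ * ε ^ 2 ∧ |deriv (deriv R) x| ≤ C₀ * ε * |deriv R x|)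

/-! ### Auxiliary functions and lemmas -/

noncomputable def FF1 (γ s A ρ : ℝ) : ℝ := γ * ρ ^ (γ - 1) - (s - A / ρ) ^ 2
noncomputable def FF2 (s A ρ : ℝ) : ℝ := -s + 2 * A / ρ
noncomputable def dF1 (γ s A ρ : ℝ) : ℝ :=
  γ * ((γ - 1) * ρ ^ (γ - 2)) - 2 * (s - A / ρ) * (A / ρ ^ 2)
noncomputable def dPhi (γ s A ρ : ℝ) : ℝ :=
  ((-(2 * A) / ρ ^ 2) * FF1 γ s A ρ - FF2 s A ρ * dF1 γ s A ρ) / FF1 γ s A ρ ^ 2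
noncomputable def W1 (γ s η A ρ : ℝ) : ℝ :=
  FF2 s A ρ / ρ - |FF1 γ s A ρ - FF2 s A ρ ^ 2| / (ρ * FF1 γ s A ρ) / (2 * η)
noncomputable def W2 (γ s η A ρ : ℝ) : ℝ :=
  -((1/2) * dPhi γ s A ρ + FF2 s A ρ / (ρ * FF1 γ s A ρ))
    - (η / 2) * (|FF1 γ s A ρ - FF2 s A ρ ^ 2| / (ρ * FF1 γ s A ρ))

lemma hasDerivAt_aux (A ρ : ℝ) (hρ : ρ ≠ 0) :
    HasDerivAt (fun x : ℝ => A / x) (-(A / ρ ^ 2)) ρ := by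
  have h := (hasDerivAt_inv hρ).const_mul A
  simp only [div_eq_mul_inv]
  exact h.congr_deriv (by ring)

lemma hasDerivAt_FF2 (s A ρ : ℝ) (hρ : ρ ≠ 0) :
    HasDerivAt (FF2 s A) (-(2 * A) / ρ ^ 2) ρ := by
  have h : HasDerivAt (fun x : ℝ => 2 * A / x) (-(2*A) / ρ ^ 2) ρ := by
    have := hasDerivAt_aux (2*A) ρ hρ
    convert this using 1
    ring
  exact h.const_add (-s)

lemma hasDerivAt_FF1 (γ s A ρ : ℝ) (hρ : 0 < ρ) :
    HasDerivAt (FF1 γ s A) (dF1 γ s A ρ) ρ := by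
  have h1 : HasDerivAt (fun x : ℝ => γ * x ^ (γ - 1)) (γ * ((γ - 1) * ρ ^ (γ - 2))) ρ := by
    have := (Real.hasDerivAt_rpow_const (p := γ - 1) (Or.inl hρ.ne')).const_mul γ
    exact this.congr_deriv (by rw [show γ - 1 - 1 = γ - 2 by ring])
  have h2 : HasDerivAt (fun x : ℝ => (s - A / x) ^ 2) (2 * (s - A / ρ) * (A / ρ ^ 2)) ρ := by
    have hu : HasDerivAt (fun x : ℝ => s - A / x) (A / ρ ^ 2) ρ := by
      simpa using ((hasDerivAt_aux A ρ hρ.ne').const_sub s)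
    have := hu.pow 2
    exact this.congr_deriv (by push_cast; ring)
  exact h1.sub h2

lemma hasDerivAt_Phi (γ s A ρ : ℝ) (hρ : 0 < ρ) (hF : FF1 γ s A ρ ≠ 0) :
    HasDerivAt (fun r => FF2 s A r / FF1 γ s A r) (dPhi γ s A ρ) ρ :=
  (hasDerivAt_FF2 s A ρ hρ.ne').div (hasDerivAt_FF1 γ s A ρ hρ) hF

section key
variable (γ Rm s c m δ η : ℝ)

lemma eRmc (hRm : (0:ℝ) < Rm) : Rm * c / Rm = c := by field_simp

lemma eF1 (hRm : 0 < Rm) (hc2 : c^2 = γ * Rm^(γ-1)) :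
    FF1 γ s (Rm*c) Rm = c^2 - (s-c)^2 := by
  unfold FF1; rw [eRmc Rm c hRm, ← hc2]

lemma eF2 (hRm : 0 < Rm) : FF2 s (Rm*c) Rm = 2*c - s := by
  unfold FF2
  have h : Rm ≠ 0 := hRm.ne'
  field_simp
  ring

lemma edF1 (hγ : 1 < γ) (hRm : 0 < Rm) (hc2 : c^2 = γ * Rm^(γ-1)) :
    dF1 γ s (Rm*c) Rm = ((γ-1)*c^2 - 2*(s-c)*c)/Rm := by
  have e2 : Rm^(γ-2) = Rm^(γ-1)/Rm := by
    rw [show γ-2 = (γ-1)-1 by ring, Real.rpow_sub hRm, Real.rpow_one]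
  have eK : Rm^(γ-1) = c^2/γ := by rw [hc2]; field_simp
  unfold dF1
  rw [e2, eK, eRmc Rm c hRm]
  have hγ0 : γ ≠ 0 := by linarith
  field_simp

lemma eabs (hc : 0 < c) (hs2 : s < 2*c) (hm : m = |c - s|) :
    |(c^2 - (s-c)^2) - (2*c-s)^2| = 2*(2*c-s)*m := by
  rw [hm, show (c^2 - (s-c)^2) - (2*c-s)^2 = (2*(2*c-s))*(s-c) by ring,
    abs_mul, abs_of_pos (by linarith : (0:ℝ) < 2*(2*c-s)), abs_sub_comm]

lemma keyW1 (hγ : 1 < γ) (hRm : 0 < Rm) (hs : 0 < s) (hc : 0 < c) (hs2 : s < 2*c)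
    (hc2 : c^2 = γ * Rm^(γ-1)) (hm : m = |c - s|)
    (hδ : 0 < δ) (hη : η = (m+δ)/(s*(2*c-s))) :
    W1 γ s η (Rm*c) Rm = (2*c-s)*δ/(Rm*(m+δ)) := by
  have hm0 : 0 ≤ m := hm ▸ abs_nonneg _
  have hf1 : (0:ℝ) < c^2 - (s-c)^2 := by nlinarith
  have hmδ : 0 < m + δ := by linarith
  unfold W1
  rw [eF1 γ Rm s c hRm hc2, eF2 Rm s c hRm, eabs s c m hc hs2 hm, hη]
  field_simp
  ring

lemma keyW2 (hγ : 1 < γ) (hRm : 0 < Rm) (hs : 0 < s) (hc : 0 < c) (hs2 : s < 2*c)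
    (hc2 : c^2 = γ * Rm^(γ-1)) (hm : m = |c - s|)
    (hδ : 0 < δ) (hη : η = (m+δ)/(s*(2*c-s))) :
    W2 γ s η (Rm*c) Rm
      = (2*c-s)*((c-s)^2 + (γ-1)*c^2/2 - (m+δ)*m)/(Rm*(s*(2*c-s))^2) := by
  have hm0 : 0 ≤ m := hm ▸ abs_nonneg _
  have hf1 : (0:ℝ) < c^2 - (s-c)^2 := by nlinarith
  have hmδ : 0 < m + δ := by linarith
  unfold W2 dPhi
  rw [eF1 γ Rm s c hRm hc2, eF2 Rm s c hRm, edF1 γ Rm s c hγ hRm hc2,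
    eabs s c m hc hs2 hm, hη]
  have hss : s*(2*c-s) = c^2 - (s-c)^2 := by ring
  rw [hss]
  field_simp
  ring
end key

lemma contW1 (γ s η A₀ ρ₀ : ℝ) (hρ : ρ₀ ≠ 0) (hη : (2:ℝ)*η ≠ 0)
    (hF : FF1 γ s A₀ ρ₀ ≠ 0) (hρF : ρ₀ * FF1 γ s A₀ ρ₀ ≠ 0) :
    ContinuousAt (fun p : ℝ×ℝ => W1 γ s η p.1 p.2) (A₀,ρ₀) := by
  unfold W1 FF1 FF2 at *
  fun_prop (disch := simp_all <;> positivity)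

lemma contW2 (γ s η A₀ ρ₀ : ℝ) (hρ : ρ₀ ≠ 0) (hρ2 : ρ₀^2 ≠ 0)
    (hF : FF1 γ s A₀ ρ₀ ≠ 0) (hF2 : FF1 γ s A₀ ρ₀ ^ 2 ≠ 0)
    (hρF : ρ₀ * FF1 γ s A₀ ρ₀ ≠ 0) :
    ContinuousAt (fun p : ℝ×ℝ => W2 γ s η p.1 p.2) (A₀,ρ₀) := by
  unfold W2 dPhi dF1 FF1 FF2 at *
  fun_prop (disch := simp_all <;> positivity)

lemma contFF1 (γ s A₀ ρ₀ : ℝ) (hρ : ρ₀ ≠ 0) :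
    ContinuousAt (fun p : ℝ×ℝ => FF1 γ s p.1 p.2) (A₀,ρ₀) := by
  unfold FF1 at *
  fun_prop (disch := simp_all <;> positivity)

lemma sqrt_ident (γ Rm : ℝ) (hγ : 1 < γ) (hRm : 0 < Rm) :
    Rm * Rm / Real.sqrt (2 * Rm) * Real.sqrt (2 * (γ * Rm ^ (γ-2)))
      = Rm * Real.sqrt (γ * Rm ^ (γ-1)) := by
  have h2 : (0:ℝ) < 2 * Rm := by linarith
  have hs2 : Real.sqrt (2*Rm) ≠ 0 := by positivity
  rw [div_mul_eq_mul_div, div_eq_iff hs2]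
  have hk : (0:ℝ) ≤ γ * Rm ^ (γ-1) := by positivity
  rw [show Rm * Real.sqrt (γ * Rm ^ (γ-1)) * Real.sqrt (2*Rm)
      = Rm * (Real.sqrt (γ * Rm ^ (γ-1)) * Real.sqrt (2*Rm)) by ring,
    ← Real.sqrt_mul hk]
  rw [show Rm * Rm * Real.sqrt (2 * (γ * Rm ^ (γ-2)))
      = Real.sqrt ((Rm*Rm)^2) * Real.sqrt (2 * (γ * Rm ^ (γ-2))) by
        rw [Real.sqrt_sq (by positivity)],
    ← Real.sqrt_mul (by positivity)]
  congr 1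
  have e2 : Rm ^ (γ-2) = Rm ^ (γ-1) / Rm := by
    rw [show γ-2 = (γ-1)-1 by ring, Real.rpow_sub hRm, Real.rpow_one]
  rw [e2]
  rw [show (Rm*Rm)^2 * (2*(γ*(Rm^(γ-1)/Rm))) = Rm^2 * (γ*Rm^(γ-1)*(2*Rm)) by
      rw [div_eq_mul_inv]
      have h := mul_inv_cancel₀ hRm.ne'
      linear_combination (2*γ*Rm^(γ-1)*Rm^3) * h,
    Real.sqrt_mul (by positivity), Real.sqrt_sq hRm.le]

lemma tendsto_Aflux (γ Rm : ℝ) (hγ : 1 < γ) (hRm : 0 < Rm) :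
    Tendsto (fun ε => Aflux γ Rm ε) (𝓝[>] (0:ℝ))
      (𝓝 (Rm * Real.sqrt (γ * Rm ^ (γ-1)))) := by
  have hγ1 : γ - 1 ≠ 0 := by intro h; linarith [sub_eq_zero.mp h]
  have hd : HasDerivAt (fun t : ℝ => enth γ (Rm - t)) (-(γ * Rm ^ (γ-2))) 0 := by
    have hin : HasDerivAt (fun t : ℝ => Rm - t) (-1) 0 := by
      simpa using (hasDerivAt_id (0:ℝ)).const_sub Rm
    have hrp : HasDerivAt (fun t : ℝ => (Rm - t) ^ (γ-1))
        ((-1) * ((γ-1) * (Rm - 0) ^ (γ-1-1))) 0 := by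
      have := hin.rpow_const (p := γ-1) (Or.inl (by simpa using hRm.ne'))
      convert this using 1
      ring
    have := hrp.const_mul (γ / (γ-1))
    unfold enth
    refine this.congr_deriv ?_
    rw [show γ-1-1 = γ-2 by ring]
    simp only [sub_zero]
    field_simp
  rw [hasDerivAt_iff_tendsto_slope] at hd
  have hmono : 𝓝[>] (0:ℝ) ≤ 𝓝[≠] (0:ℝ) :=
    nhdsWithin_mono 0 (fun x hx => ne_of_gt hx)
  have hD : Tendsto (fun ε : ℝ => 2 * (enth γ Rm - enth γ (Rm - ε)) / ε)
      (𝓝[>] (0:ℝ)) (𝓝 (2 * (γ * Rm ^ (γ-2)))) := by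
    have h1 : Tendsto (fun ε : ℝ => (-2) * slope (fun t => enth γ (Rm - t)) 0 ε)
        (𝓝[>] (0:ℝ)) (𝓝 ((-2) * (-(γ * Rm ^ (γ-2))))) :=
      (hd.const_mul (-2)).mono_left hmono
    have h2 : ∀ ε ∈ Set.Ioi (0:ℝ),
        (-2) * slope (fun t => enth γ (Rm - t)) 0 ε
          = 2 * (enth γ Rm - enth γ (Rm - ε)) / ε := by
      intro ε hε
      have : ε ≠ 0 := ne_of_gt hε
      rw [slope_def_field]
      field_simp
      ring
    refine Tendsto.congr' ?_ (by convert h1 using 2; ring)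
    filter_upwards [self_mem_nhdsWithin] with ε hε
    rw [h2 ε hε]
  have hC : Tendsto (fun ε : ℝ => (Rm - ε) * Rm / Real.sqrt (2*Rm - ε)) (𝓝[>] (0:ℝ))
      (𝓝 (Rm * Rm / Real.sqrt (2*Rm))) := by
    have hct : ContinuousAt (fun ε : ℝ => (Rm - ε) * Rm / Real.sqrt (2*Rm - ε)) 0 := by
      apply ContinuousAt.div
      · fun_prop
      · exact Real.continuous_sqrt.continuousAt.comp (by fun_prop)
      · simp only [sub_zero]
        positivity
    simpa using hct.tendsto.mono_left nhdsWithin_le_nhds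
  have hfin := hC.mul (Real.continuous_sqrt.continuousAt.tendsto.comp hD)
  rw [← sqrt_ident γ Rm hγ hRm]
  exact hfin

set_option maxHeartbeats 1000000 in
/-- Choice of the weight `η` and estimates on the coefficients `a` and `b` (Lemma 3.3). -/
theorem stmt3 (γ Rm C₀ s : ℝ) (hγ : 1 < γ) (hRm : 0 < Rm) (hC₀ : 0 < C₀)
    (hs : 0 < s) (hs2 : s < 2 * soundSpeed γ Rm) :
    ∃ η > (0:ℝ), ∃ ε₀ > (0:ℝ), ∃ C₁ > (0:ℝ), ∃ C₂ > (0:ℝ), ∀ ε : ℝ, 0 < ε → ε < ε₀ →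
      ∀ R : ℝ → ℝ, Hprof C₀ ε Rm R →
        let f₁ : ℝ → ℝ := fun x => γ * R x ^ (γ - 1) - (s - Aflux γ Rm ε / R x) ^ 2
        let f₂ : ℝ → ℝ := fun x => -s + 2 * Aflux γ Rm ε / R x
        let g : ℝ → ℝ := fun x => (2 * Aflux γ Rm ε - s * R x) * deriv R x / (R x) ^ 2
        let a : ℝ → ℝ := fun x =>
          (1/2) * deriv (fun y => f₂ y / f₁ y) x + deriv R x * f₂ x / (R x * f₁ x)
        let b : ℝ → ℝ := fun x => deriv R x / R x - f₂ x * g x / f₁ x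
        ∀ x : ℝ,
          -g x - |b x| / (2 * η) ≥ C₁ * |deriv R x| ∧
          a x - (η / 2) * |b x| ≥ C₂ * |deriv R x| := by
  -- basic quantities
  set c : ℝ := Real.sqrt (γ * Rm ^ (γ - 1)) with hcdef
  have hkpos : (0:ℝ) < γ * Rm ^ (γ-1) := by positivity
  have hc : 0 < c := Real.sqrt_pos.mpr hkpos
  have hc2 : c ^ 2 = γ * Rm ^ (γ-1) := Real.sq_sqrt hkpos.le
  have hs2' : s < 2 * c := hs2
  set m : ℝ := |c - s| with hmdef
  have hm0 : 0 ≤ m := abs_nonneg _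
  set δ : ℝ := (γ-1) * c^2 / (4*(m+1)) with hδdef
  have hδ : 0 < δ := by
    apply div_pos
    · nlinarith
    · linarith
  have hf1s : 0 < s * (2*c - s) := by nlinarith
  set η : ℝ := (m + δ) / (s * (2*c - s)) with hηdef
  have hηpos : 0 < η := div_pos (by linarith) hf1s
  set A₀ : ℝ := Rm * c with hA₀def
  -- values of W1, W2 at the limit point
  have hV1 : W1 γ s η A₀ Rm = (2*c-s)*δ/(Rm*(m+δ)) :=
    keyW1 γ Rm s c m δ η hγ hRm hs hc hs2' hc2 rfl hδ rfl
  have hV2 : W2 γ s η A₀ Rm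
      = (2*c-s)*((c-s)^2 + (γ-1)*c^2/2 - (m+δ)*m)/(Rm*(s*(2*c-s))^2) :=
    keyW2 γ Rm s c m δ η hγ hRm hs hc hs2' hc2 rfl hδ rfl
  have hV1pos : 0 < W1 γ s η A₀ Rm := by
    rw [hV1]; apply div_pos (by nlinarith) (by nlinarith)
  have hV2pos : 0 < W2 γ s η A₀ Rm := by
    rw [hV2]
    apply div_pos _ (by positivity)
    have hδm : δ * (m+1) = (γ-1)*c^2/4 := by rw [hδdef]; field_simp
    have hmsq : m^2 = (c-s)^2 := by rw [hmdef, sq_abs]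
    have hinner : 0 < (c-s)^2 + (γ-1)*c^2/2 - (m+δ)*m := by nlinarith [hδm, hmsq, hδ]
    exact mul_pos (by linarith) hinner
  -- positivity of FF1 at the limit point
  have hF1eq : FF1 γ s A₀ Rm = c^2 - (s-c)^2 := eF1 γ Rm s c hRm hc2
  have hF1pos : 0 < FF1 γ s A₀ Rm := by rw [hF1eq]; nlinarith
  -- the neighborhood where everything is controlled
  have hev : ∀ᶠ p : ℝ×ℝ in 𝓝 (A₀, Rm),
      W1 γ s η A₀ Rm / 2 < W1 γ s η p.1 p.2 ∧
      W2 γ s η A₀ Rm / 2 < W2 γ s η p.1 p.2 ∧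
      0 < FF1 γ s p.1 p.2 ∧ 0 < p.2 := by
    have e1 : ∀ᶠ p : ℝ×ℝ in 𝓝 (A₀, Rm), W1 γ s η A₀ Rm / 2 < W1 γ s η p.1 p.2 :=
      (contW1 γ s η A₀ Rm hRm.ne' (by positivity) hF1pos.ne'
        (by positivity)).eventually (eventually_gt_nhds
          (show W1 γ s η A₀ Rm / 2 < W1 γ s η A₀ Rm by linarith))
    have e2 : ∀ᶠ p : ℝ×ℝ in 𝓝 (A₀, Rm), W2 γ s η A₀ Rm / 2 < W2 γ s η p.1 p.2 :=
      (contW2 γ s η A₀ Rm hRm.ne' (by positivity) hF1pos.ne'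
        (by positivity) (by positivity)).eventually (eventually_gt_nhds
          (show W2 γ s η A₀ Rm / 2 < W2 γ s η A₀ Rm by linarith))
    have e3 : ∀ᶠ p : ℝ×ℝ in 𝓝 (A₀, Rm), 0 < FF1 γ s p.1 p.2 :=
      (contFF1 γ s A₀ Rm hRm.ne').eventually (eventually_gt_nhds hF1pos)
    have e4 : ∀ᶠ p : ℝ×ℝ in 𝓝 (A₀, Rm), 0 < p.2 :=
      continuousAt_snd.eventually (eventually_gt_nhds hRm)
    exact e1.and (e2.and (e3.and e4))
  rw [Metric.eventually_nhds_iff] at hev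
  obtain ⟨r, hr, hball⟩ := hev
  -- control of Aflux near 0
  have hA := tendsto_Aflux γ Rm hγ hRm
  have hAev : ∀ᶠ ε in 𝓝[>] (0:ℝ), dist (Aflux γ Rm ε) A₀ < r/2 :=
    hA (Metric.ball_mem_nhds _ (by positivity))
  rw [eventually_nhdsWithin_iff, Metric.eventually_nhds_iff] at hAev
  obtain ⟨Δ, hΔ, hAball⟩ := hAev
  refine ⟨η, hηpos, min Δ (r/2), by positivity,
    W1 γ s η A₀ Rm / 2, by linarith, W2 γ s η A₀ Rm / 2, by linarith, ?_⟩
  intro ε hε hεlt R hR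
  intro f₁ f₂ g a b x
  obtain ⟨hC2diff, hbd, _⟩ := hR
  obtain ⟨hRlow, hRhigh, hD⟩ := hbd x
  set A : ℝ := Aflux γ Rm ε with hAdef
  set D : ℝ := deriv R x with hDdef
  set ρ : ℝ := R x with hρdef
  -- membership in the controlled ball
  have hεΔ : ε < Δ := lt_of_lt_of_le hεlt (min_le_left _ _)
  have hεr : ε < r/2 := lt_of_lt_of_le hεlt (min_le_right _ _)
  have hAdist : dist A A₀ < r/2 := by
    apply hAball _ (Set.mem_Ioi.mpr hε)
    rw [Real.dist_eq, sub_zero, abs_of_pos hε]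
    exact hεΔ
  have hρdist : dist ρ Rm < r := by
    rw [Real.dist_eq, abs_of_nonpos (by linarith)]
    linarith
  have hmem := hball (y := (A, ρ)) (by
    rw [Prod.dist_eq]
    exact max_lt (by simp only []; linarith [hAdist]) hρdist)
  obtain ⟨hW1x, hW2x, hF1x, hρx⟩ := hmem
  have hρne : ρ ≠ 0 := hρx.ne'
  have hF1ne : FF1 γ s A ρ ≠ 0 := hF1x.ne'
  have hF1ne' : γ * ρ ^ (γ-1) - (s - A/ρ)^2 ≠ 0 := hF1ne
  -- derivative of f₂ / f₁
  have hRd : HasDerivAt R D x := by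
    have : DifferentiableAt ℝ R x :=
      (hC2diff.differentiable (by norm_num)).differentiableAt
    exact this.hasDerivAt
  have hcomp := (hasDerivAt_Phi γ s A ρ hρx hF1ne).comp x hRd
  have hderiv : deriv (fun y => f₂ y / f₁ y) x = dPhi γ s A ρ * D := by
    have h : HasDerivAt (fun y => f₂ y / f₁ y) (dPhi γ s A ρ * D) x := hcomp
    exact h.deriv
  -- algebraic identities
  have hgeq' : (2 * A - s * ρ) * D / ρ ^ 2 = FF2 s A ρ * D / ρ := by
    unfold FF2
    field_simp
    ring
  have hgeq : g x = FF2 s A ρ * D / ρ := by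
    show (2 * A - s * ρ) * D / ρ ^ 2 = FF2 s A ρ * D / ρ
    exact hgeq'
  have hbeq : b x = D * ((FF1 γ s A ρ - FF2 s A ρ ^ 2) / (ρ * FF1 γ s A ρ)) := by
    have h1 : b x = D / ρ - FF2 s A ρ * ((2 * A - s * ρ) * D / ρ ^ 2) / FF1 γ s A ρ := rfl
    rw [h1, hgeq']
    field_simp
  have habs : |b x| = |D| * (|FF1 γ s A ρ - FF2 s A ρ ^ 2| / (ρ * FF1 γ s A ρ)) := by
    rw [hbeq, abs_mul, abs_div, abs_of_pos (mul_pos hρx hF1x)]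
  have hDabs : |D| = -D := abs_of_neg hD
  constructor
  · have hcalc : -g x - |b x| / (2 * η) = |D| * W1 γ s η A ρ := by
      rw [hgeq, habs, hDabs]
      unfold W1
      ring
    rw [hcalc]
    calc W1 γ s η A₀ Rm / 2 * |D| ≤ W1 γ s η A ρ * |D| :=
          mul_le_mul_of_nonneg_right (le_of_lt hW1x) (abs_nonneg _)
      _ = |D| * W1 γ s η A ρ := by ring
  · have haeq : a x = (1/2) * (dPhi γ s A ρ * D) + D * FF2 s A ρ / (ρ * FF1 γ s A ρ) := by
      show (1/2) * deriv (fun y => f₂ y / f₁ y) x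
          + D * (-s + 2 * A / ρ) / (ρ * (γ * ρ ^ (γ - 1) - (s - A / ρ) ^ 2)) = _
      rw [hderiv]
      unfold FF1 FF2
      ring
    have hcalc : a x - (η / 2) * |b x| = |D| * W2 γ s η A ρ := by
      rw [haeq, habs, hDabs]
      unfold W2
      ring
    rw [hcalc]
    calc W2 γ s η A₀ Rm / 2 * |D| ≤ W2 γ s η A ρ * |D| :=
          mul_le_mul_of_nonneg_right (le_of_lt hW2x) (abs_nonneg _)
      _ = |D| * W2 γ s η A ρ := by ring
end

section
/- Let s, μ, k ∈ ℝ, let R, U : ℝ → ℝ with R three times continuously differentiable and strictly positive and U twice continuously differentiable, and let h' : (0,∞) → ℝ be continuously differentiable. Let λ ∈ ℂ and let ρ, u : ℝ → ℂ with ρ three times continuously differentiable and u twice continuously differentiable satisfy, for all x ∈ ℝ, the integrated spectral equations: λρ = (s−U)ρ' − Ru' and λu = −h'(R)ρ' + (s−U)u' + μR⁻¹(Ru' + Uρ')' − μR⁻²(RU)'ρ' + (k²/2)R^{−1/2}(R^{−1/2}ρ')'' − (k²/2)R^{−3/2}(R^{1/2})''ρ'. Define v := Uρ + Ru, g := R·(U/R)',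 f₁ := R·h'(R) − U², f₂ := s − 2U, and (L_Qρ) := (1/2)R^{1/2}(R^{−1/2}ρ')'' − (1/2)R^{−1/2}(R^{1/2})''ρ'. Then for all x ∈ ℝ: λρ = sρ' − v' + gρ + (R'/R)v, and λv = −f₁ρ' + f₂v' + μv'' − f₂gρ − (R'/R)f₂v − 2μU'ρ' − μ(R'/R)v' − μg'ρ − μ(R'/R)'v + k²·(L_Qρ). -/
open Real Filter

set_option maxHeartbeats 2000000 in
/-- The change of variables `(ρ, u) ↦ (ρ, v)` with `v = Uρ + Ru` transforms the integrated
spectral problem into the working form used in the energy estimates. -/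
theorem stmt7 (s μ k : ℝ) (R U : ℝ → ℝ) (hR : ContDiff ℝ 3 R) (hRpos : ∀ x : ℝ, 0 < R x)
    (hU : ContDiff ℝ 2 U) (hp : ℝ → ℝ) (hhp : ContDiffOn ℝ 1 hp (Set.Ioi 0))
    (lam : ℂ) (ρ u : ℝ → ℂ) (hρ : ContDiff ℝ 3 ρ) (hu : ContDiff ℝ 2 u)
    (heq1 : ∀ x : ℝ, lam * ρ x =
      ((s - U x : ℝ) : ℂ) * deriv ρ x - (R x : ℂ) * deriv u x)
    (heq2 : ∀ x : ℝ, lam * u x =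
      -((hp (R x) : ℝ) : ℂ) * deriv ρ x + ((s - U x : ℝ) : ℂ) * deriv u x
        + (μ : ℂ) * (((R x)⁻¹ : ℝ) : ℂ) *
            deriv (fun y => (R y : ℂ) * deriv u y + (U y : ℂ) * deriv ρ y) x
        - ((μ * ((R x) ^ 2)⁻¹ * deriv (fun y => R y * U y) x : ℝ) : ℂ) * deriv ρ x
        + ((k ^ 2 / 2 : ℝ) : ℂ) * ((R x ^ (-(1:ℝ)/2) : ℝ) : ℂ) *
            deriv (deriv (fun y => ((R y ^ (-(1:ℝ)/2) : ℝ) : ℂ) * deriv ρ y)) x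
        - ((k ^ 2 / 2 * R x ^ (-(3:ℝ)/2)
              * deriv (deriv (fun y => R y ^ ((1:ℝ)/2))) x : ℝ) : ℂ) * deriv ρ x) :
    let v : ℝ → ℂ := fun x => (U x : ℂ) * ρ x + (R x : ℂ) * u x
    let g : ℝ → ℝ := fun x => R x * deriv (fun y => U y / R y) x
    let f₁ : ℝ → ℝ := fun x => R x * hp (R x) - (U x) ^ 2
    let f₂ : ℝ → ℝ := fun x => s - 2 * U x
    let rr : ℝ → ℝ := fun x => deriv R x / R x
    let LQ : ℝ → ℂ := fun x =>
      (1/2 : ℂ) * ((R x ^ ((1:ℝ)/2) : ℝ) : ℂ) *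
          deriv (deriv (fun y => ((R y ^ (-(1:ℝ)/2) : ℝ) : ℂ) * deriv ρ y)) x
        - ((1/2 * R x ^ (-(1:ℝ)/2)
              * deriv (deriv (fun y => R y ^ ((1:ℝ)/2))) x : ℝ) : ℂ) * deriv ρ x
    ∀ x : ℝ,
      (lam * ρ x =
        (s : ℂ) * deriv ρ x - deriv v x + (g x : ℂ) * ρ x + (rr x : ℂ) * v x) ∧
      (lam * v x =
        -(f₁ x : ℂ) * deriv ρ x + (f₂ x : ℂ) * deriv v x + (μ : ℂ) * deriv (deriv v) x
          - (f₂ x : ℂ) * (g x : ℂ) * ρ x - (rr x : ℂ) * (f₂ x : ℂ) * v x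
          - 2 * (μ : ℂ) * ((deriv U x : ℝ) : ℂ) * deriv ρ x
          - (μ : ℂ) * (rr x : ℂ) * deriv v x - (μ : ℂ) * ((deriv g x : ℝ) : ℂ) * ρ x
          - (μ : ℂ) * ((deriv rr x : ℝ) : ℂ) * v x + (k : ℂ) ^ 2 * LQ x) := by
  have hRne : ∀ y : ℝ, R y ≠ 0 := fun y => (hRpos y).ne'
  have hR1 : ∀ y, HasDerivAt R (deriv R y) y :=
    fun y => (hR.differentiable (by norm_num) y).hasDerivAt
  have hRd : ContDiff ℝ 2 (deriv R) :=
    (contDiff_succ_iff_deriv.mp (show ContDiff ℝ (2+1) R from hR)).2.2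
  have hR2 : ∀ y, HasDerivAt (deriv R) (deriv (deriv R) y) y :=
    fun y => (hRd.differentiable (by norm_num) y).hasDerivAt
  have hU1 : ∀ y, HasDerivAt U (deriv U y) y :=
    fun y => (hU.differentiable (by norm_num) y).hasDerivAt
  have hUd : ContDiff ℝ 1 (deriv U) :=
    (contDiff_succ_iff_deriv.mp (show ContDiff ℝ (1+1) U from hU)).2.2
  have hU2 : ∀ y, HasDerivAt (deriv U) (deriv (deriv U) y) y :=
    fun y => (hUd.differentiable (by norm_num) y).hasDerivAt
  have hρ1 : ∀ y, HasDerivAt ρ (deriv ρ y) y :=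
    fun y => (hρ.differentiable (by norm_num) y).hasDerivAt
  have hρd : ContDiff ℝ 2 (deriv ρ) :=
    (contDiff_succ_iff_deriv.mp (show ContDiff ℝ (2+1) ρ from hρ)).2.2
  have hρ2 : ∀ y, HasDerivAt (deriv ρ) (deriv (deriv ρ) y) y :=
    fun y => (hρd.differentiable (by norm_num) y).hasDerivAt
  have hu1 : ∀ y, HasDerivAt u (deriv u y) y :=
    fun y => (hu.differentiable (by norm_num) y).hasDerivAt
  have hud : ContDiff ℝ 1 (deriv u) :=
    (contDiff_succ_iff_deriv.mp (show ContDiff ℝ (1+1) u from hu)).2.2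
  have hu2 : ∀ y, HasDerivAt (deriv u) (deriv (deriv u) y) y :=
    fun y => (hud.differentiable (by norm_num) y).hasDerivAt
  -- first derivative of v
  have hv1 : ∀ y, HasDerivAt (fun t : ℝ => (U t : ℂ) * ρ t + (R t : ℂ) * u t)
      (((deriv U y : ℝ) : ℂ) * ρ y + (U y : ℂ) * deriv ρ y
        + (((deriv R y : ℝ) : ℂ) * u y + (R y : ℂ) * deriv u y)) y :=
    fun y => ((hU1 y).ofReal_comp.mul (hρ1 y)).add ((hR1 y).ofReal_comp.mul (hu1 y))
  have hvfun : deriv (fun t : ℝ => (U t : ℂ) * ρ t + (R t : ℂ) * u t)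
      = fun y => ((deriv U y : ℝ) : ℂ) * ρ y + (U y : ℂ) * deriv ρ y
        + (((deriv R y : ℝ) : ℂ) * u y + (R y : ℂ) * deriv u y) :=
    funext fun y => (hv1 y).deriv
  -- pointwise formula for deriv (U/R)
  have hdURfun : deriv (fun y => U y / R y)
      = fun y => (deriv U y * R y - U y * deriv R y) / R y ^ 2 :=
    funext fun y => ((hU1 y).div (hR1 y) (hRne y)).deriv
  have hgfun : (fun t : ℝ => R t * deriv (fun y => U y / R y) t)
      = fun t => deriv U t - U t * deriv R t / R t := by
    funext t
    rw [hdURfun]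
    field_simp [hRne t]
  intro v g f₁ f₂ rr LQ x
  have ddiv : deriv (fun y => U y / R y) x
      = (deriv U x * R x - U x * deriv R x) / R x ^ 2 :=
    ((hU1 x).div (hR1 x) (hRne x)).deriv
  have dw : deriv (fun y => (R y : ℂ) * deriv u y + (U y : ℂ) * deriv ρ y) x
      = (((deriv R x : ℝ) : ℂ) * deriv u x + (R x : ℂ) * deriv (deriv u) x)
        + (((deriv U x : ℝ) : ℂ) * deriv ρ x + (U x : ℂ) * deriv (deriv ρ) x) :=
    HasDerivAt.deriv (((hR1 x).ofReal_comp.mul (hu2 x)).add ((hU1 x).ofReal_comp.mul (hρ2 x)))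
  have dru : deriv (fun y => R y * U y) x = deriv R x * U x + R x * deriv U x :=
    ((hR1 x).mul (hU1 x)).deriv
  have dvv : deriv (fun y : ℝ => ((deriv U y : ℝ) : ℂ) * ρ y + (U y : ℂ) * deriv ρ y
        + (((deriv R y : ℝ) : ℂ) * u y + (R y : ℂ) * deriv u y)) x
      = (((deriv (deriv U) x : ℝ) : ℂ) * ρ x + ((deriv U x : ℝ) : ℂ) * deriv ρ x
          + (((deriv U x : ℝ) : ℂ) * deriv ρ x + (U x : ℂ) * deriv (deriv ρ) x))
        + (((deriv (deriv R) x : ℝ) : ℂ) * u x + ((deriv R x : ℝ) : ℂ) * deriv u x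
          + (((deriv R x : ℝ) : ℂ) * deriv u x + (R x : ℂ) * deriv (deriv u) x)) :=
    HasDerivAt.deriv
      ((((hU2 x).ofReal_comp.mul (hρ1 x)).add ((hU1 x).ofReal_comp.mul (hρ2 x))).add
        (((hR2 x).ofReal_comp.mul (hu1 x)).add ((hR1 x).ofReal_comp.mul (hu2 x))))
  have dg : deriv (fun t : ℝ => R t * deriv (fun y => U y / R y) t) x
      = deriv (deriv U) x
        - ((deriv U x * deriv R x + U x * deriv (deriv R) x) * R x
            - U x * deriv R x * deriv R x) / R x ^ 2 := by
    rw [hgfun]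
    exact ((hU2 x).sub (((hU1 x).mul (hR2 x)).div (hR1 x) (hRne x))).deriv
  have drr : deriv (fun t : ℝ => deriv R t / R t) x
      = (deriv (deriv R) x * R x - deriv R x * deriv R x) / R x ^ 2 :=
    ((hR2 x).div (hR1 x) (hRne x)).deriv
  have hA : R x ^ ((1:ℝ)/2) = R x * R x ^ (-(1:ℝ)/2) := by
    rw [show ((1:ℝ)/2) = 1 + (-(1:ℝ)/2) by ring, Real.rpow_add (hRpos x), Real.rpow_one]
  have hB : R x ^ (-(1:ℝ)/2) = R x * R x ^ (-(3:ℝ)/2) := by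
    rw [show (-(1:ℝ)/2) = 1 + (-(3:ℝ)/2) by ring, Real.rpow_add (hRpos x), Real.rpow_one]
  have hRCne : (R x : ℂ) ≠ 0 := Complex.ofReal_ne_zero.mpr (hRne x)
  refine ⟨?_, ?_⟩
  · simp only [v, g, rr]
    rw [heq1 x, (hv1 x).deriv, ddiv]
    push_cast
    field_simp [hRCne]
    ring
  · simp only [v, g, f₁, f₂, rr, LQ]
    rw [show lam * ((U x : ℂ) * ρ x + (R x : ℂ) * u x)
        = (U x : ℂ) * (lam * ρ x) + (R x : ℂ) * (lam * u x) from by ring]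
    rw [heq1 x, heq2 x]
    simp only [hvfun]
    rw [dvv, dw, dru, dg, drr, ddiv, hA, hB]
    push_cast
    simp only [inv_eq_one_div]
    field_simp [hRCne]
    have hD : ((R x : ℂ)) ^ 2 * (R x : ℂ) * (R x : ℂ) * ((R x : ℂ)) ^ 2 * ((R x : ℂ)) ^ 2 ≠ 0 := by
      simp [hRne x]
    ring
end
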